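/- Let x_1, …, x_n ∈ ℝ^d (d ≤ n) be unit vectors with |x_i^T x_j| ≤ δ for all i ≠ j, and let s_max be the maximum eigenvalue of Σ_{i=1}^n x_i x_i^T. Set A_i := I − η x_i x_i^T for η ≥ 0. Then the minimum eigenvalue of W_RS(n,1,A_1,…,A_n) is at least 1 − s_max Σ_{m=1}^{n} η^m n^{m−1} δ^{m−1}. -/

import Mathlib

/-- Spectral norm (operator 2-norm) of a real square matrix. -/
noncomputable def specNorm {d : ℕ} (A : Matrix (Fin d) (Fin d) ℝ) : ℝ :=
  ‖Matrix.toEuclideanCLM (𝕜 := ℝ) A‖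

/-- Ordered product `A (σ 1) * A (σ 2) * ⋯ * A (σ n)` (increasing index order). -/
noncomputable def permProd {n d : ℕ} (A : Fin n → Matrix (Fin d) (Fin d) ℝ)
    (σ : Equiv.Perm (Fin n)) : Matrix (Fin d) (Fin d) ℝ :=
  (List.ofFn fun i => A (σ i)).prod

/-- Single-shuffle mean: `(1/n!) Σ_σ (Π_i A_{σ(i)})^K`. -/
noncomputable def WSS (n K : ℕ) {d : ℕ} (A : Fin n → Matrix (Fin d) (Fin d) ℝ) :
    Matrix (Fin d) (Fin d) ℝ :=
  ((n.factorial : ℝ)⁻¹) • ∑ σ : Equiv.Perm (Fin n), (permProd A σ) ^ K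

/-- Random-reshuffle mean: `((1/n!) Σ_σ Π_i A_{σ(i)})^K`. -/
noncomputable def WRS (n K : ℕ) {d : ℕ} (A : Fin n → Matrix (Fin d) (Fin d) ℝ) :
    Matrix (Fin d) (Fin d) ℝ :=
  (((n.factorial : ℝ)⁻¹) • ∑ σ : Equiv.Perm (Fin n), permProd A σ) ^ K

/-- GD mean: `((1/n) Σ_i A_i)^(nK)`. -/
noncomputable def WGD (n K : ℕ) {d : ℕ} (A : Fin n → Matrix (Fin d) (Fin d) ℝ) :
    Matrix (Fin d) (Fin d) ℝ :=
  (((n : ℝ)⁻¹) • ∑ i : Fin n, A i) ^ (n * K)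
open Matrix


private lemma dotProduct_sum' {ι : Type*} [Fintype ι] {d : ℕ} (v : Fin d → ℝ) (f : ι → Fin d → ℝ) :
    v ⬝ᵥ (∑ j, f j) = ∑ j, v ⬝ᵥ f j := by
  simp only [dotProduct, Finset.sum_apply, Finset.mul_sum]
  exact Finset.sum_comm

private lemma sum_mulVec'' {ι : Type*} [Fintype ι] {d : ℕ} (M : ι → Matrix (Fin d) (Fin d) ℝ)
    (v : Fin d → ℝ) : (∑ i, M i) *ᵥ v = ∑ i, M i *ᵥ v := by
  ext j
  simp only [mulVec, dotProduct, Matrix.sum_apply, Finset.sum_apply, Finset.sum_mul]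
  exact Finset.sum_comm

private lemma ofFn_reverse {α : Type*} {k : ℕ} (f : Fin k → α) :
    (List.ofFn f).reverse = List.ofFn (fun i => f i.rev) := by
  apply List.ext_getElem
  · simp
  · intro i h1 h2
    simp only [List.getElem_reverse, List.getElem_ofFn, List.length_ofFn]
    congr 1
    apply Fin.ext
    simp only [Fin.val_rev]
    simp at h1 h2 ⊢
    omega

private lemma vmv_symm {d : ℕ} (a : Fin d → ℝ) : (vecMulVec a a)ᵀ = vecMulVec a a := by
  ext i j
  simp [vecMulVec_apply, transpose_apply, mul_comm]

private lemma permProd_transpose {n d : ℕ} (x : Fin n → Fin d → ℝ) (η : ℝ)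
    (σ : Equiv.Perm (Fin n)) :
    (permProd (fun i => 1 - η • vecMulVec (x i) (x i)) σ)ᵀ
      = permProd (fun i => 1 - η • vecMulVec (x i) (x i)) (σ * Fin.revPerm) := by
  unfold permProd
  rw [transpose_list_prod, List.map_ofFn, ofFn_reverse]
  exact congrArg _ (congrArg _ (funext fun i => by
    simp [Function.comp_apply, transpose_sub, transpose_smul, transpose_one, vmv_symm,
      Equiv.Perm.mul_apply]))

private lemma sum_permProd_herm {n d : ℕ} (x : Fin n → Fin d → ℝ) (η : ℝ) :
    (∑ σ : Equiv.Perm (Fin n), permProd (fun i => 1 - η • vecMulVec (x i) (x i)) σ).IsHermitian := by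
  show _ᴴ = _
  rw [conjTranspose_eq_transpose_of_trivial, transpose_sum]
  rw [Finset.sum_congr rfl (fun σ _ => permProd_transpose x η σ)]
  exact Fintype.sum_equiv (Equiv.mulRight Fin.revPerm) _ _ (fun σ => rfl)

private lemma sum_geom_bound {n : ℕ} (hn : 2 ≤ n) {η δ : ℝ} (hη : 0 ≤ η) (hδ0 : 0 ≤ δ) :
    η ^ 2 * δ * (1 + η * δ) ^ (n - 2) * (n : ℝ)
      ≤ ∑ m ∈ Finset.Icc 2 n, η ^ m * (n : ℝ) ^ (m - 1) * δ ^ (m - 1) := by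
  have h1 : ∑ m ∈ Finset.Icc 2 n, η ^ m * (n:ℝ) ^ (m-1) * δ ^ (m-1)
      = ∑ k ∈ Finset.range (n - 1), η^2*δ*(n:ℝ) * ((n:ℝ)*(η*δ))^k := by
    rw [← Finset.Ico_add_one_right_eq_Icc, Finset.sum_Ico_eq_sum_range]
    rw [show n + 1 - 2 = n - 1 from by omega]
    refine Finset.sum_congr rfl fun k _ => ?_
    rw [show 2 + k - 1 = k + 1 from by omega]
    ring
  have h2 : (1 + η*δ)^(n-2) ≤ ∑ k ∈ Finset.range (n-1), ((n:ℝ)*(η*δ))^k := by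
    have hb := add_pow (η*δ) 1 (n-2)
    rw [show n-1 = (n-2)+1 from by omega, show (1+η*δ) = (η*δ+1) from by ring, hb]
    refine Finset.sum_le_sum fun k hk => ?_
    rw [one_pow, mul_one]
    have hc : (((n-2).choose k : ℕ) : ℝ) ≤ (n:ℝ)^k := by
      exact_mod_cast (Nat.choose_le_pow _ _).trans (Nat.pow_le_pow_left (by omega) k)
    calc (η*δ)^k * (((n-2).choose k : ℕ):ℝ) ≤ (η*δ)^k * (n:ℝ)^k :=
          mul_le_mul_of_nonneg_left hc (by positivity)
      _ = ((n:ℝ)*(η*δ))^k := by rw [mul_pow]; ring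
  have h3 : η^2*δ*(n:ℝ) * ((1+η*δ)^(n-2))
      ≤ η^2*δ*(n:ℝ) * ∑ k ∈ Finset.range (n-1), ((n:ℝ)*(η*δ))^k :=
    mul_le_mul_of_nonneg_left h2 (by positivity)
  rw [h1, ← Finset.mul_sum]
  nlinarith [h3]

private lemma mulVec_sum' {d k : ℕ} (H : Matrix (Fin d) (Fin d) ℝ) (f : Fin k → Fin d → ℝ) :
    H *ᵥ (∑ j, f j) = ∑ j, H *ᵥ f j :=
  map_sum H.mulVecLin f Finset.univ



lemma rayleigh {d : ℕ} {H : Matrix (Fin d) (Fin d) ℝ} (hH : H.IsHermitian) (v : Fin d → ℝ) :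
    v ⬝ᵥ H *ᵥ v ≤ (⨆ k, hH.eigenvalues k) * (v ⬝ᵥ v) := by
  classical
  set b := hH.eigenvectorBasis with hb
  set lam := hH.eigenvalues with hlam
  set c : Fin d → ℝ := fun j => (b j : Fin d → ℝ) ⬝ᵥ v with hc
  have hv : v = ∑ j, c j • (b j : Fin d → ℝ) := by
    have h := b.sum_repr' (WithLp.toLp 2 v)
    have h2 : ∀ j, (inner ℝ (b j) (WithLp.toLp 2 v) : ℝ) = c j := by
      intro j
      simp [PiLp.inner_apply, RCLike.inner_apply, hc, dotProduct]
      exact Finset.sum_congr rfl fun i _ => mul_comm _ _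
    simp only [h2] at h
    have h3 := congrArg WithLp.ofLp h
    simp only [WithLp.ofLp_sum, WithLp.ofLp_smul, WithLp.ofLp_toLp] at h3
    exact h3.symm
  have hmul : H *ᵥ v = ∑ j, (lam j * c j) • (b j : Fin d → ℝ) := by
    conv_lhs => rw [hv, mulVec_sum']
    refine Finset.sum_congr rfl fun j _ => ?_
    rw [mulVec_smul,
      show H *ᵥ (b j : Fin d → ℝ) = lam j • (b j : Fin d → ℝ) from hH.mulVec_eigenvectorBasis j,
      smul_smul, mul_comm]
  have hvb : ∀ j, v ⬝ᵥ (b j : Fin d → ℝ) = c j := fun j => dotProduct_comm _ _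
  have hQ : v ⬝ᵥ H *ᵥ v = ∑ j, lam j * c j ^ 2 := by
    rw [hmul, dotProduct_sum']
    refine Finset.sum_congr rfl fun j _ => ?_
    rw [dotProduct_smul, smul_eq_mul, hvb j]; ring
  have hN : v ⬝ᵥ v = ∑ j, c j ^ 2 := by
    conv_lhs => rw [hv, dotProduct_sum']
    refine Finset.sum_congr rfl fun j _ => ?_
    rw [dotProduct_smul, smul_eq_mul, ← hv, hvb j]; ring
  rw [hQ, hN, Finset.mul_sum]
  refine Finset.sum_le_sum fun j _ => ?_
  have hle : lam j ≤ ⨆ k, lam k := le_ciSup (Set.finite_range lam).bddAbove j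
  nlinarith [sq_nonneg (c j)]

private lemma vmv_mulVec {d : ℕ} (a b w : Fin d → ℝ) :
    vecMulVec a b *ᵥ w = (b ⬝ᵥ w) • a := by
  ext i
  simp only [mulVec, dotProduct, vecMulVec_apply, Pi.smul_apply, smul_eq_mul, Finset.sum_mul]
  exact Finset.sum_congr rfl fun j _ => by ring

private lemma core {d : ℕ} {η δ : ℝ} (hη : 0 ≤ η) (hδ0 : 0 ≤ δ) (v : Fin d → ℝ) :
    ∀ (k : ℕ) (y : Fin k → Fin d → ℝ), (∀ i j : Fin k, i ≠ j → |y i ⬝ᵥ y j| ≤ δ) →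
    ∃ c : Fin k → ℝ,
      ((List.ofFn fun i => (1 : Matrix (Fin d) (Fin d) ℝ) - η • Matrix.vecMulVec (y i) (y i)).prod *ᵥ v
        = v + ∑ i, c i • y i)
      ∧ (∑ i, |c i|) ≤ η * (1 + η * δ) ^ (k - 1) * ∑ i, |y i ⬝ᵥ v|
      ∧ ∀ i, |c i| ≤ η * |y i ⬝ᵥ v| + η ^ 2 * δ * (1 + η * δ) ^ (k - 2) * ∑ j, |y j ⬝ᵥ v| := by
  intro k
  induction k with
  | zero =>
    intro y hy
    refine ⟨0, by simp, by simp, fun i => i.elim0⟩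
  | succ k ih =>
    intro y hy
    obtain ⟨c, hEq, hSum, hPt⟩ := ih (fun i => y i.succ)
      (fun i j hij => hy _ _ (fun h => hij (Fin.succ_injective _ h)))
    have hδη : (1:ℝ) ≤ 1 + η * δ := by nlinarith
    have hpow0 : (0:ℝ) ≤ (1 + η * δ) ^ (k - 1) := by positivity
    have hpow1 : (1:ℝ) ≤ (1 + η * δ) ^ k := one_le_pow₀ hδη
    set P : Matrix (Fin d) (Fin d) ℝ :=
      (List.ofFn fun i : Fin k => (1:Matrix (Fin d) (Fin d) ℝ) - η • vecMulVec (y i.succ) (y i.succ)).prod with hP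
    set w : Fin d → ℝ := P *ᵥ v with hw
    set t : ℝ := y 0 ⬝ᵥ w with ht
    set S : ℝ := ∑ i, |c i| with hS
    set B0 : ℝ := |y 0 ⬝ᵥ v| with hB0
    set Bt : ℝ := ∑ i : Fin k, |y i.succ ⬝ᵥ v| with hBt
    have hS0 : 0 ≤ S := Finset.sum_nonneg fun i _ => abs_nonneg _
    have hBt0 : 0 ≤ Bt := Finset.sum_nonneg fun i _ => abs_nonneg _
    have hB00 : 0 ≤ B0 := abs_nonneg _
    have hts : |t| ≤ B0 + δ * S := by
      have hwv : t = y 0 ⬝ᵥ v + ∑ i, c i * (y 0 ⬝ᵥ y i.succ) := by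
        rw [ht, hEq, dotProduct_add, dotProduct_sum']
        simp [smul_eq_mul, mul_comm]
      rw [hwv]
      have h1 : |∑ i, c i * (y 0 ⬝ᵥ y i.succ)| ≤ ∑ i, |c i| * δ := by
        refine (Finset.abs_sum_le_sum_abs _ _).trans (Finset.sum_le_sum fun i _ => ?_)
        rw [abs_mul]
        exact mul_le_mul_of_nonneg_left (hy 0 i.succ (Fin.succ_ne_zero i).symm) (abs_nonneg _)
      calc |y 0 ⬝ᵥ v + ∑ i, c i * (y 0 ⬝ᵥ y i.succ)|
          ≤ B0 + |∑ i, c i * (y 0 ⬝ᵥ y i.succ)| := by rw [hB0]; exact abs_add_le _ _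
        _ ≤ B0 + ∑ i, |c i| * δ := by linarith
        _ = B0 + δ * S := by rw [hS, ← Finset.sum_mul, mul_comm]
    -- the combined coefficient vector
    refine ⟨Fin.cons (-(η * t)) c, ?_, ?_, ?_⟩
    · -- equation
      rw [List.ofFn_succ, List.prod_cons, ← mulVec_mulVec, ← hP, ← hw,
        sub_mulVec, smul_mulVec, one_mulVec, vmv_mulVec, ← ht, hEq]
      rw [Fin.sum_univ_succ]
      simp only [Fin.cons_zero, Fin.cons_succ]
      module
    · -- sum bound
      rw [Fin.sum_univ_succ]
      simp only [Fin.cons_zero, Fin.cons_succ, abs_neg, abs_mul, abs_of_nonneg hη, ← hS]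
      have hS' : (1 + η * δ) * S ≤ η * (1 + η * δ) ^ k * Bt := by
        rcases Nat.eq_zero_or_pos k with hk | hk
        · subst hk
          have h0 : S = 0 := by rw [hS]; simp
          have hb : Bt = 0 := by rw [hBt]; simp
          rw [h0, hb]
          simp
        · have h2 : (1 + η * δ) * (η * (1 + η * δ) ^ (k - 1) * Bt)
              = η * (1 + η * δ) ^ k * Bt := by
            conv_rhs => rw [show k = (k-1) + 1 from by omega, pow_succ]
            ring
          calc (1 + η * δ) * S ≤ (1 + η * δ) * (η * (1 + η * δ) ^ (k - 1) * Bt) :=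
                mul_le_mul_of_nonneg_left hSum (by linarith)
            _ = η * (1 + η * δ) ^ k * Bt := h2
      have habs : η * |t| ≤ η * (B0 + δ * S) := mul_le_mul_of_nonneg_left hts hη
      have hsplit : ∑ i : Fin (k+1), |y i ⬝ᵥ v| = B0 + Bt := by
        rw [Fin.sum_univ_succ, ← hB0, ← hBt]
      rw [hsplit, show (k + 1 - 1) = k from rfl]
      nlinarith [mul_le_mul_of_nonneg_left hpow1 (mul_nonneg hη hB00)]
    · -- pointwise bound
      intro i
      have hsplit : ∑ j : Fin (k+1), |y j ⬝ᵥ v| = B0 + Bt := by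
        rw [Fin.sum_univ_succ, ← hB0, ← hBt]
      rw [hsplit, show (k + 1 - 2) = k - 1 from by omega]
      have hη2δ : (0:ℝ) ≤ η ^ 2 * δ := by positivity
      refine Fin.cases ?_ ?_ i
      · -- i = 0
        simp only [Fin.cons_zero, abs_neg, abs_mul, abs_of_nonneg hη, ← hB0]
        have h3 : η * (δ * S) ≤ η * (δ * (η * (1 + η * δ) ^ (k-1) * Bt)) := by
          refine mul_le_mul_of_nonneg_left (mul_le_mul_of_nonneg_left ?_ hδ0) hη
          exact hSum
        nlinarith [mul_le_mul_of_nonneg_left hts hη,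
          mul_nonneg (mul_nonneg hη2δ hpow0) hB00]
      · -- i = succ j
        intro j
        simp only [Fin.cons_succ]
        have h4 : (1 + η * δ) ^ (k - 2) ≤ (1 + η * δ) ^ (k - 1) :=
          pow_le_pow_right₀ hδη (by omega)
        have h5 : (1 + η * δ) ^ (k - 2) * Bt ≤ (1 + η * δ) ^ (k - 1) * (B0 + Bt) := by
          have := mul_le_mul h4 (le_refl Bt) hBt0 (by positivity)
          nlinarith [mul_nonneg hpow0 hB00]
        have := hPt j
        nlinarith [mul_le_mul_of_nonneg_left h5 hη2δ]

private lemma quad {n d : ℕ} {η δ : ℝ} (hη : 0 ≤ η) (hδ0 : 0 ≤ δ)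
    (x : Fin n → Fin d → ℝ) (hδ : ∀ i j, i ≠ j → |x i ⬝ᵥ x j| ≤ δ)
    (v : Fin d → ℝ) (σ : Equiv.Perm (Fin n)) :
    v ⬝ᵥ v - η * (∑ i, (x i ⬝ᵥ v) ^ 2)
      - η ^ 2 * δ * (1 + η * δ) ^ (n - 2) * (∑ i, |x i ⬝ᵥ v|) ^ 2
    ≤ v ⬝ᵥ (permProd (fun i => 1 - η • vecMulVec (x i) (x i)) σ) *ᵥ v := by
  obtain ⟨c, hEq, hSum, hPt⟩ := core hη hδ0 v n (fun i => x (σ i))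
    (fun i j hij => hδ _ _ (fun h => hij (σ.injective h)))
  have hperm : permProd (fun i => 1 - η • vecMulVec (x i) (x i)) σ
      = (List.ofFn fun i => (1 : Matrix (Fin d) (Fin d) ℝ)
          - η • vecMulVec (x (σ i)) (x (σ i))).prod := rfl
  rw [hperm, hEq, dotProduct_add, dotProduct_sum']
  set K : ℝ := η ^ 2 * δ * (1 + η * δ) ^ (n - 2) with hK
  have hK0 : 0 ≤ K := by rw [hK]; positivity
  set B : ℝ := ∑ i : Fin n, |x i ⬝ᵥ v| with hB
  have hBp : ∑ i : Fin n, |x (σ i) ⬝ᵥ v| = B := Equiv.sum_comp σ (fun i => |x i ⬝ᵥ v|)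
  have hQp : ∑ i : Fin n, (x (σ i) ⬝ᵥ v) ^ 2 = ∑ i : Fin n, (x i ⬝ᵥ v) ^ 2 :=
    Equiv.sum_comp σ (fun i => (x i ⬝ᵥ v) ^ 2)
  have h1 : ∀ i : Fin n, -(|c i| * |x (σ i) ⬝ᵥ v|) ≤ v ⬝ᵥ (c i • x (σ i)) := by
    intro i
    have hdp : v ⬝ᵥ (c i • x (σ i)) = c i * (x (σ i) ⬝ᵥ v) := by
      rw [dotProduct_comm v, smul_dotProduct, smul_eq_mul]
    rw [hdp, ← abs_mul]
    exact neg_abs_le _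
  have h2 : ∀ i : Fin n, |c i| * |x (σ i) ⬝ᵥ v|
      ≤ (η * |x (σ i) ⬝ᵥ v| + K * B) * |x (σ i) ⬝ᵥ v| := by
    intro i
    refine mul_le_mul_of_nonneg_right ?_ (abs_nonneg _)
    have := hPt i
    rw [hBp] at this
    exact this
  have h3 : ∑ i : Fin n, (η * |x (σ i) ⬝ᵥ v| + K * B) * |x (σ i) ⬝ᵥ v|
      = η * (∑ i, (x i ⬝ᵥ v) ^ 2) + K * B ^ 2 := by
    have : ∀ i : Fin n, (η * |x (σ i) ⬝ᵥ v| + K * B) * |x (σ i) ⬝ᵥ v|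
        = η * (x (σ i) ⬝ᵥ v) ^ 2 + K * B * |x (σ i) ⬝ᵥ v| := by
      intro i
      have := sq_abs (x (σ i) ⬝ᵥ v)
      nlinarith [sq_abs (x (σ i) ⬝ᵥ v)]
    rw [Finset.sum_congr rfl fun i _ => this i, Finset.sum_add_distrib, ← Finset.mul_sum,
      ← Finset.mul_sum, hQp, hBp]
    ring
  have h4 : -(η * (∑ i, (x i ⬝ᵥ v) ^ 2) + K * B ^ 2) ≤ ∑ i : Fin n, v ⬝ᵥ (c i • x (σ i)) := by
    calc -(η * (∑ i, (x i ⬝ᵥ v) ^ 2) + K * B ^ 2)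
        = -∑ i : Fin n, (η * |x (σ i) ⬝ᵥ v| + K * B) * |x (σ i) ⬝ᵥ v| := by rw [h3]
      _ ≤ -∑ i : Fin n, |c i| * |x (σ i) ⬝ᵥ v| := by
          simp only [neg_le_neg_iff]
          exact Finset.sum_le_sum fun i _ => h2 i
      _ = ∑ i : Fin n, -(|c i| * |x (σ i) ⬝ᵥ v|) := by rw [← Finset.sum_neg_distrib]
      _ ≤ ∑ i : Fin n, v ⬝ᵥ (c i • x (σ i)) := Finset.sum_le_sum fun i _ => h1 i
  linarith

private lemma quadH {n d : ℕ} (x : Fin n → Fin d → ℝ) (v : Fin d → ℝ) :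
    v ⬝ᵥ (∑ i, vecMulVec (x i) (x i)) *ᵥ v = ∑ i, (x i ⬝ᵥ v) ^ 2 := by
  rw [sum_mulVec'', dotProduct_sum']
  refine Finset.sum_congr rfl fun i _ => ?_
  rw [vmv_mulVec, dotProduct_smul, smul_eq_mul, dotProduct_comm]
  ring

/-- Lower bound on the minimum eigenvalue of W_RS(n,1), expressed as the positive
semidefiniteness of W_RS − (bound)·I.  Here x_1,…,x_n are unit vectors in ℝ^d (d ≤ n) with
|xᵢᵀxⱼ| ≤ δ for i ≠ j, and s_max is the maximum eigenvalue of Σᵢ xᵢxᵢᵀ. -/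
theorem statement8 (n d : ℕ) (hd : d ≤ n) (x : Fin n → Fin d → ℝ) (δ smax η : ℝ)
    (hη : 0 ≤ η)
    (hunit : ∀ i, x i ⬝ᵥ x i = 1)
    (hδ : ∀ i j, i ≠ j → |x i ⬝ᵥ x j| ≤ δ)
    (hH : (∑ i : Fin n, Matrix.vecMulVec (x i) (x i)).IsHermitian)
    (hsmax : smax = ⨆ k, hH.eigenvalues k) :
    (WRS n 1 (fun i => 1 - η • Matrix.vecMulVec (x i) (x i))
      - (1 - smax * ∑ m ∈ Finset.Icc 1 n, η ^ m * (n : ℝ) ^ (m - 1) * δ ^ (m - 1)) •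
          (1 : Matrix (Fin d) (Fin d) ℝ)).PosSemidef := by
  classical
  set A : Fin n → Matrix (Fin d) (Fin d) ℝ := fun i => 1 - η • vecMulVec (x i) (x i) with hA
  set co : ℝ := 1 - smax * ∑ m ∈ Finset.Icc 1 n, η ^ m * (n:ℝ) ^ (m-1) * δ ^ (m-1) with hco
  have hpsd : (∑ i : Fin n, vecMulVec (x i) (x i)).PosSemidef := by
    refine posSemidef_iff_dotProduct_mulVec.mpr ⟨hH, fun v => ?_⟩
    have hst : star v = v := by funext i; simp
    rw [hst, quadH]
    exact Finset.sum_nonneg fun i _ => sq_nonneg _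
  have smax0 : 0 ≤ smax := by
    rw [hsmax]
    exact Real.iSup_nonneg fun k => hpsd.eigenvalues_nonneg k
  have hRay : ∀ v : Fin d → ℝ, ∑ i, (x i ⬝ᵥ v) ^ 2 ≤ smax * (v ⬝ᵥ v) := by
    intro v
    rw [hsmax, ← quadH x v]
    exact rayleigh hH v
  have hvv : ∀ v : Fin d → ℝ, 0 ≤ v ⬝ᵥ v := by
    intro v
    exact Finset.sum_nonneg fun i _ => mul_self_nonneg _
  have key : ∀ (σ : Equiv.Perm (Fin n)) (v : Fin d → ℝ),
      co * (v ⬝ᵥ v) ≤ v ⬝ᵥ (permProd A σ) *ᵥ v := by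
    intro σ v
    by_cases hn2 : 2 ≤ n
    · have δ0 : 0 ≤ δ := by
        refine (abs_nonneg _).trans (hδ ⟨0, by omega⟩ ⟨1, by omega⟩ ?_)
        simp [Fin.ext_iff]
      have hquad := quad hη δ0 x hδ v σ
      set Q : ℝ := ∑ i, (x i ⬝ᵥ v) ^ 2 with hQdef
      set B : ℝ := ∑ i : Fin n, |x i ⬝ᵥ v| with hBdef
      set K : ℝ := η ^ 2 * δ * (1 + η * δ) ^ (n - 2) with hKdef
      have hK0 : 0 ≤ K := by rw [hKdef]; positivity
      have hB2 : B ^ 2 ≤ (n:ℝ) * Q := by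
        have := sq_sum_le_card_mul_sum_sq (s := (Finset.univ : Finset (Fin n)))
          (f := fun i => |x i ⬝ᵥ v|)
        simp only [Finset.card_univ, Fintype.card_fin, sq_abs] at this
        exact this
      have hQ0 : 0 ≤ Q := Finset.sum_nonneg fun i _ => sq_nonneg _
      have e1 : η * Q ≤ η * (smax * (v ⬝ᵥ v)) := mul_le_mul_of_nonneg_left (hRay v) hη
      have e2 : B ^ 2 ≤ (n:ℝ) * (smax * (v ⬝ᵥ v)) :=
        hB2.trans (mul_le_mul_of_nonneg_left (hRay v) (by positivity))
      have e3 : K * B ^ 2 ≤ K * ((n:ℝ) * (smax * (v ⬝ᵥ v))) :=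
        mul_le_mul_of_nonneg_left e2 hK0
      have hgeom := sum_geom_bound hn2 hη δ0
      have e4 : K * (n:ℝ) * (smax * (v ⬝ᵥ v))
          ≤ (∑ m ∈ Finset.Icc 2 n, η ^ m * (n:ℝ) ^ (m-1) * δ ^ (m-1)) * (smax * (v ⬝ᵥ v)) :=
        mul_le_mul_of_nonneg_right hgeom (mul_nonneg smax0 (hvv v))
      have hsplit : ∑ m ∈ Finset.Icc 1 n, η ^ m * (n:ℝ) ^ (m-1) * δ ^ (m-1)
          = η + ∑ m ∈ Finset.Icc 2 n, η ^ m * (n:ℝ) ^ (m-1) * δ ^ (m-1) := by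
        rw [show Finset.Icc 1 n = insert 1 (Finset.Icc 2 n) from by
          ext m; simp only [Finset.mem_Icc, Finset.mem_insert]; omega,
          Finset.sum_insert (by simp)]
        simp
      have expand : co * (v ⬝ᵥ v) = (v ⬝ᵥ v) - η * (smax * (v ⬝ᵥ v))
          - (∑ m ∈ Finset.Icc 2 n, η ^ m * (n:ℝ) ^ (m-1) * δ ^ (m-1)) * (smax * (v ⬝ᵥ v)) := by
        rw [hco, hsplit]; ring
      rw [expand]
      have e3' : K * B ^ 2 ≤ K * (n:ℝ) * (smax * (v ⬝ᵥ v)) := by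
        calc K * B ^ 2 ≤ K * ((n:ℝ) * (smax * (v ⬝ᵥ v))) := e3
          _ = K * (n:ℝ) * (smax * (v ⬝ᵥ v)) := by ring
      linarith
    · have hn01 : n = 0 ∨ n = 1 := by omega
      rcases hn01 with hn | hn
      · subst hn
        have h0 : permProd A σ = 1 := by
          unfold permProd
          simp
        rw [h0, one_mulVec]
        have : co = 1 := by rw [hco]; simp
        rw [this, one_mul]
      · subst hn
        have h0 : permProd A σ = A 0 := by
          unfold permProd
          rw [List.ofFn_succ]
          simp [Subsingleton.elim (σ 0) 0]
        have hc1 : co = 1 - smax * η := by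
          rw [hco, Finset.Icc_self, Finset.sum_singleton]
          norm_num
        have hray1 := hRay v
        rw [Fin.sum_univ_one] at hray1
        rw [h0, hc1, hA]
        rw [sub_mulVec, smul_mulVec, one_mulVec, vmv_mulVec, dotProduct_sub,
          dotProduct_smul, smul_eq_mul, dotProduct_smul, smul_eq_mul,
          dotProduct_comm v (x 0)]
        nlinarith [mul_le_mul_of_nonneg_left hray1 hη, sq_nonneg (x 0 ⬝ᵥ v)]
  refine posSemidef_iff_dotProduct_mulVec.mpr ⟨?_, ?_⟩
  · -- Hermitian part
    have h1 := sum_permProd_herm x η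
    have hW : WRS n 1 A = ((n.factorial : ℝ)⁻¹) • ∑ σ : Equiv.Perm (Fin n), permProd A σ := by
      rw [WRS, pow_one]
    rw [hW]
    show _ᴴ = _
    simp only [conjTranspose_sub, conjTranspose_smul, conjTranspose_one, star_trivial]
    rw [show (∑ σ : Equiv.Perm (Fin n), permProd A σ)ᴴ = ∑ σ : Equiv.Perm (Fin n), permProd A σ
      from h1]
  · intro v
    have hst : star v = v := by funext i; simp
    rw [hst]
    have hW : WRS n 1 A = ((n.factorial : ℝ)⁻¹) • ∑ σ : Equiv.Perm (Fin n), permProd A σ := by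
      rw [WRS, pow_one]
    rw [hW, sub_mulVec, smul_mulVec, smul_mulVec, one_mulVec, dotProduct_sub,
      dotProduct_smul, dotProduct_smul, sum_mulVec'', dotProduct_sum']
    have hfac : (0:ℝ) < (n.factorial : ℝ) := by
      exact_mod_cast Nat.factorial_pos n
    have hsum : (n.factorial : ℝ) * (co * (v ⬝ᵥ v))
        ≤ ∑ σ : Equiv.Perm (Fin n), v ⬝ᵥ (permProd A σ) *ᵥ v := by
      calc (n.factorial : ℝ) * (co * (v ⬝ᵥ v))
          = ∑ _σ : Equiv.Perm (Fin n), co * (v ⬝ᵥ v) := by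
            rw [Finset.sum_const, Finset.card_univ, Fintype.card_perm, Fintype.card_fin,
              nsmul_eq_mul]
        _ ≤ ∑ σ : Equiv.Perm (Fin n), v ⬝ᵥ (permProd A σ) *ᵥ v :=
            Finset.sum_le_sum fun σ _ => key σ v
    have h5 : co * (v ⬝ᵥ v) ≤ (n.factorial : ℝ)⁻¹ • ∑ σ : Equiv.Perm (Fin n),
        v ⬝ᵥ (permProd A σ) *ᵥ v := by
      rw [smul_eq_mul]
      calc co * (v ⬝ᵥ v) = (n.factorial : ℝ)⁻¹ * ((n.factorial : ℝ) * (co * (v ⬝ᵥ v))) := by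
            field_simp
        _ ≤ (n.factorial : ℝ)⁻¹ * ∑ σ : Equiv.Perm (Fin n), v ⬝ᵥ (permProd A σ) *ᵥ v :=
            mul_le_mul_of_nonneg_left hsum (by positivity)
    simp only [smul_eq_mul] at h5 ⊢
    linarith
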